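/- arXiv:1410.7015 — 3 statements merged into one kernel-verified Lean document; each statement's English description precedes it below -/
import Mathlib

section
/- For real parameters 0 ≤ α < β, the ratio I_β(x)/I_α(x) of modified Bessel functions of the first kind is positive and monotonically increasing on (0,∞). -/
/-- Modified Bessel function of the first kind of real order `γ`. -/
noncomputable def besselI (γ x : ℝ) : ℝ :=
  (x / 2) ^ γ * ∑' n : ℕ, (x / 2) ^ (2 * n) / (n.factorial * Real.Gamma (γ + n + 1))

open Real Set Filter Topology

namespace BesselRatio

/-- The series coefficients. -/
noncomputable def c (γ : ℝ) (n : ℕ) : ℝ :=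
  ((1:ℝ)/2) ^ (γ + 2*(n:ℝ)) / (n.factorial * Real.Gamma (γ + n + 1))

lemma gamma_pos {γ : ℝ} (hγ : 0 ≤ γ) (n : ℕ) : 0 < Real.Gamma (γ + n + 1) :=
  Real.Gamma_pos_of_pos (by positivity)

lemma c_pos {γ : ℝ} (hγ : 0 ≤ γ) (n : ℕ) : 0 < c γ n := by
  apply div_pos (Real.rpow_pos_of_pos (by norm_num) _)
  exact mul_pos (by exact_mod_cast n.factorial_pos) (gamma_pos hγ n)

lemma c_rec {γ : ℝ} (hγ : 0 ≤ γ) (n : ℕ) :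
    c γ (n+1) * (4 * (n+1) * (γ + n + 1)) = c γ n := by
  have h1 : γ + (n:ℝ) + 1 ≠ 0 := by positivity
  have hg : Real.Gamma (γ + (n+1:ℕ) + 1) = (γ + n + 1) * Real.Gamma (γ + n + 1) := by
    push_cast
    rw [show γ + ((n:ℝ) + 1) + 1 = (γ + n + 1) + 1 by ring, Real.Gamma_add_one h1]
  have hp : ((1:ℝ)/2) ^ (γ + 2*((n+1:ℕ):ℝ)) = ((1:ℝ)/2) ^ (γ + 2*(n:ℝ)) * (1/4) := by
    push_cast
    rw [show γ + 2*((n:ℝ)+1) = (γ + 2*(n:ℝ)) + ((2:ℕ):ℝ) by push_cast; ring,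
      Real.rpow_add (by norm_num), Real.rpow_natCast]
    norm_num
  have hf : ((n+1:ℕ).factorial : ℝ) = (n+1) * n.factorial := by
    rw [Nat.factorial_succ]; push_cast; ring
  rw [c, c, hg, hp, hf]
  have hG := (gamma_pos hγ n).ne'
  have hF : (n.factorial : ℝ) ≠ 0 := by exact_mod_cast n.factorial_pos.ne'
  field_simp

lemma c_le {γ : ℝ} (hγ : 0 ≤ γ) (n : ℕ) :
    c γ n ≤ c γ 0 / (4^n * (n.factorial:ℝ)^2) := by
  induction n with
  | zero => simp
  | succ n ih =>
    have hrec := c_rec hγ n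
    have hpos : (0:ℝ) < 4 * (n+1) * (γ + n + 1) := by positivity
    have : c γ (n+1) = c γ n / (4 * (n+1) * (γ + n + 1)) := by
      field_simp [hpos.ne'] at hrec ⊢; linarith [hrec]
    rw [this]
    have h2 : c γ n / (4 * (n+1) * (γ + n + 1)) ≤ c γ n / (4 * (n+1) * (n + 1)) := by
      apply div_le_div_of_nonneg_left (c_pos hγ n).le (by positivity)
      have : ((n:ℝ)+1) ≤ γ + n + 1 := by linarith
      nlinarith
    refine h2.trans ?_
    rw [div_le_div_iff₀ (by positivity) (by positivity)]
    have hf : ((n+1:ℕ).factorial : ℝ) = (n+1) * n.factorial := by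
      rw [Nat.factorial_succ]; push_cast; ring
    calc c γ n * (4^(n+1) * ((n+1:ℕ).factorial:ℝ)^2)
        = (c γ n * (4^n * (n.factorial:ℝ)^2)) * (4*(n+1)*(n+1)) := by rw [hf]; ring
      _ ≤ (c γ 0 / (4^n * (n.factorial:ℝ)^2) * (4^n * (n.factorial:ℝ)^2)) * (4*(n+1)*(n+1)) := by
          apply mul_le_mul_of_nonneg_right (mul_le_mul_of_nonneg_right ih (by positivity)) (by positivity)
      _ = c γ 0 * (4*(n+1)*(n+1)) := by
          congr 1
          field_simp


lemma sq_le_four_pow (n : ℕ) : ((n:ℝ)+1)^2 ≤ 4^n := by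
  induction n with
  | zero => norm_num
  | succ m ihm =>
    have h0 : (0:ℝ) ≤ (m:ℝ) := Nat.cast_nonneg m
    push_cast
    calc ((m:ℝ)+1+1)^2 ≤ 4*((m:ℝ)+1)^2 := by nlinarith
      _ ≤ 4*4^m := by linarith
      _ = 4^(m+1) := by ring

lemma Q_nonneg {γ : ℝ} (hγ : 0 ≤ γ) (n : ℕ) : (0:ℝ) ≤ (γ+2*(n:ℝ))*(γ+2*(n:ℝ)+1)+1 := by
  have h0 : (0:ℝ) ≤ (n:ℝ) := Nat.cast_nonneg n
  nlinarith

lemma summable_core {γ : ℝ} (hγ : 0 ≤ γ) {r : ℝ} (hr : 0 ≤ r) :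
    Summable (fun n : ℕ => c γ n * ((γ+2*n)*(γ+2*n+1)+1) * r^n) := by
  have key : Summable (fun n : ℕ => (c γ 0 * ((γ+3)^2+1)) * (r^n / n.factorial)) :=
    (Real.summable_pow_div_factorial r).mul_left _
  apply Summable.of_nonneg_of_le (fun n => mul_nonneg (mul_nonneg (c_pos hγ n).le (Q_nonneg hγ n))
    (pow_nonneg hr n)) (fun n => ?_) key
  have h0 : (0:ℝ) ≤ (n:ℝ) := Nat.cast_nonneg n
  have h1 : c γ n ≤ c γ 0 / (4^n * (n.factorial:ℝ)^2) := c_le hγ n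
  have ha : γ+2*(n:ℝ) ≤ (γ+3)*((n:ℝ)+1) := by nlinarith
  have hb : γ+2*(n:ℝ)+1 ≤ (γ+3)*((n:ℝ)+1) := by nlinarith
  have h2 : (γ+2*(n:ℝ))*(γ+2*n+1)+1 ≤ ((γ+3)^2+1) * ((n:ℝ)+1)^2 := by nlinarith
  have h3 := sq_le_four_pow n
  have hfac : (1:ℝ) ≤ (n.factorial:ℝ) := by exact_mod_cast n.factorial_pos
  have hQ := Q_nonneg hγ n
  have hc0 := (c_pos hγ 0).le
  have e1 : c γ n * ((γ+2*n)*(γ+2*n+1)+1) * r^n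
      ≤ (c γ 0 / (4^n * (n.factorial:ℝ)^2)) * (((γ+3)^2+1) * ((n:ℝ)+1)^2) * r^n := by
    apply mul_le_mul_of_nonneg_right _ (pow_nonneg hr n)
    exact mul_le_mul h1 h2 hQ (by positivity)
  have e2 : (c γ 0 / (4^n * (n.factorial:ℝ)^2)) * (((γ+3)^2+1) * ((n:ℝ)+1)^2) * r^n
      = (c γ 0 * ((γ+3)^2+1) * r^n) * (((n:ℝ)+1)^2 / (4^n * (n.factorial:ℝ)^2)) := by ring
  have e3 : ((n:ℝ)+1)^2 / (4^n * (n.factorial:ℝ)^2) ≤ 1 / (n.factorial:ℝ) := by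
    rw [div_le_div_iff₀ (by positivity) (by positivity)]
    calc ((n:ℝ)+1)^2 * (n.factorial:ℝ) ≤ 4^n * (n.factorial:ℝ) :=
          mul_le_mul_of_nonneg_right h3 (by positivity)
      _ ≤ 4^n * (n.factorial:ℝ)^2 := by
          have h4 : (0:ℝ) < (4:ℝ)^n := by positivity
          exact mul_le_mul_of_nonneg_left (by nlinarith) h4.le
      _ = 1 * ((4:ℝ)^n * (n.factorial:ℝ)^2) := by ring
  calc c γ n * ((γ+2*n)*(γ+2*n+1)+1) * r^n
      ≤ (c γ 0 * ((γ+3)^2+1) * r^n) * (((n:ℝ)+1)^2 / (4^n * (n.factorial:ℝ)^2)) := by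
        rw [← e2]; exact e1
    _ ≤ (c γ 0 * ((γ+3)^2+1) * r^n) * (1 / (n.factorial:ℝ)) := by
        apply mul_le_mul_of_nonneg_left e3 (by positivity)
    _ = c γ 0 * ((γ+3)^2+1) * (r^n / (n.factorial:ℝ)) := by ring



noncomputable def P (γ x : ℝ) : ℝ := ∑' n : ℕ, c γ n * x ^ (γ + 2*(n:ℝ))

noncomputable def D1 (γ x : ℝ) : ℝ :=
  ∑' n : ℕ, c γ n * ((γ + 2*(n:ℝ)) * x ^ (γ + 2*(n:ℝ) - 1))

noncomputable def D2 (γ x : ℝ) : ℝ :=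
  ∑' n : ℕ, c γ n * ((γ + 2*(n:ℝ)) * ((γ + 2*(n:ℝ) - 1) * x ^ (γ + 2*(n:ℝ) - 2)))

lemma rpow_split {x : ℝ} (hx : 0 < x) (t : ℝ) (n : ℕ) :
    x ^ (t + 2*(n:ℝ)) = x ^ t * (x^2)^n := by
  rw [Real.rpow_add hx, show (2*(n:ℝ)) = ((2*n : ℕ):ℝ) by push_cast; ring,
    Real.rpow_natCast, pow_mul]

lemma one_le_Q {γ : ℝ} (hγ : 0 ≤ γ) (n : ℕ) : (1:ℝ) ≤ (γ+2*(n:ℝ))*(γ+2*(n:ℝ)+1)+1 := by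
  have h0 : (0:ℝ) ≤ (n:ℝ) := Nat.cast_nonneg n
  nlinarith

lemma lin_le_Q {γ : ℝ} (hγ : 0 ≤ γ) (n : ℕ) :
    γ+2*(n:ℝ) ≤ (γ+2*(n:ℝ))*(γ+2*(n:ℝ)+1)+1 := by
  have h0 : (0:ℝ) ≤ (n:ℝ) := Nat.cast_nonneg n
  nlinarith

lemma quad_le_Q {γ : ℝ} (hγ : 0 ≤ γ) (n : ℕ) :
    (γ+2*(n:ℝ)) * |γ+2*(n:ℝ)-1| ≤ (γ+2*(n:ℝ))*(γ+2*(n:ℝ)+1)+1 := by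
  have h0 : (0:ℝ) ≤ (n:ℝ) := Nat.cast_nonneg n
  have habs : |γ+2*(n:ℝ)-1| ≤ γ+2*(n:ℝ)+1 := by
    rw [abs_le]; constructor <;> nlinarith
  have := mul_le_mul_of_nonneg_left habs (by linarith : (0:ℝ) ≤ γ+2*(n:ℝ))
  linarith

/-- summability of the value series -/
lemma sumP {γ x : ℝ} (hγ : 0 ≤ γ) (hx : 0 < x) :
    Summable (fun n : ℕ => c γ n * x ^ (γ + 2*(n:ℝ))) := by
  apply Summable.of_nonneg_of_le
    (fun n => mul_nonneg (c_pos hγ n).le (Real.rpow_pos_of_pos hx _).le)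
    (fun n => ?_) (((summable_core hγ (sq_nonneg x)).mul_right (x ^ γ)))
  rw [rpow_split hx]
  have h1 : (1:ℝ) ≤ (γ+2*(n:ℝ))*(γ+2*(n:ℝ)+1)+1 := one_le_Q hγ n
  have h2 : (0:ℝ) ≤ c γ n * (x^2)^n * x^γ := by
    have := (c_pos hγ n).le
    have := (Real.rpow_pos_of_pos hx γ).le
    positivity
  calc c γ n * (x ^ γ * (x^2)^n) = 1 * (c γ n * (x^2)^n * x^γ) := by ring
    _ ≤ ((γ+2*(n:ℝ))*(γ+2*(n:ℝ)+1)+1) * (c γ n * (x^2)^n * x^γ) :=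
        mul_le_mul_of_nonneg_right h1 h2
    _ = c γ n * ((γ+2*↑n)*(γ+2*↑n+1)+1) * (x^2)^n * x^γ := by ring

lemma sumD1 {γ x : ℝ} (hγ : 0 ≤ γ) (hx : 0 < x) :
    Summable (fun n : ℕ => c γ n * ((γ + 2*(n:ℝ)) * x ^ (γ + 2*(n:ℝ) - 1))) := by
  apply Summable.of_nonneg_of_le
    (fun n => by
      have h0 : (0:ℝ) ≤ (n:ℝ) := Nat.cast_nonneg n
      have := (c_pos hγ n).le
      have := (Real.rpow_pos_of_pos hx (γ + 2*(n:ℝ) - 1)).le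
      have hl : (0:ℝ) ≤ γ + 2*(n:ℝ) := by linarith
      positivity)
    (fun n => ?_) (((summable_core hγ (sq_nonneg x)).mul_right (x ^ (γ-1))))
  have he : x ^ (γ + 2*(n:ℝ) - 1) = x ^ (γ-1) * (x^2)^n := by
    rw [show γ + 2*(n:ℝ) - 1 = (γ-1) + 2*(n:ℝ) by ring, rpow_split hx]
  rw [he]
  have h1 := lin_le_Q hγ n
  have h2 : (0:ℝ) ≤ c γ n * (x^2)^n * x^(γ-1) := by
    have := (c_pos hγ n).le
    have := (Real.rpow_pos_of_pos hx (γ-1)).le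
    positivity
  calc c γ n * ((γ + 2*(n:ℝ)) * (x ^ (γ-1) * (x^2)^n))
      = (γ + 2*(n:ℝ)) * (c γ n * (x^2)^n * x^(γ-1)) := by ring
    _ ≤ ((γ+2*(n:ℝ))*(γ+2*(n:ℝ)+1)+1) * (c γ n * (x^2)^n * x^(γ-1)) :=
        mul_le_mul_of_nonneg_right h1 h2
    _ = c γ n * ((γ+2*↑n)*(γ+2*↑n+1)+1) * (x^2)^n * x^(γ-1) := by ring

lemma sumD2 {γ x : ℝ} (hγ : 0 ≤ γ) (hx : 0 < x) :
    Summable (fun n : ℕ => c γ n * ((γ + 2*(n:ℝ)) * ((γ + 2*(n:ℝ) - 1) * x ^ (γ + 2*(n:ℝ) - 2)))) := by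
  apply Summable.of_norm_bounded (((summable_core hγ (sq_nonneg x)).mul_right (x ^ (γ-2))))
  intro n
  have h0 : (0:ℝ) ≤ (n:ℝ) := Nat.cast_nonneg n
  have hl : (0:ℝ) ≤ γ + 2*(n:ℝ) := by linarith
  have hxp := Real.rpow_pos_of_pos hx (γ + 2*(n:ℝ) - 2)
  have he : x ^ (γ + 2*(n:ℝ) - 2) = x ^ (γ-2) * (x^2)^n := by
    rw [show γ + 2*(n:ℝ) - 2 = (γ-2) + 2*(n:ℝ) by ring, rpow_split hx]
  rw [Real.norm_eq_abs, abs_mul, abs_mul, abs_mul, abs_of_nonneg (c_pos hγ n).le,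
    abs_of_nonneg hl, abs_of_nonneg hxp.le, he]
  have h1 := quad_le_Q hγ n
  have h2 : (0:ℝ) ≤ c γ n * (x^2)^n * x^(γ-2) := by
    have := (c_pos hγ n).le
    have := (Real.rpow_pos_of_pos hx (γ-2)).le
    positivity
  calc c γ n * ((γ + 2*(n:ℝ)) * (|γ + 2*(n:ℝ) - 1| * (x ^ (γ-2) * (x^2)^n)))
      = ((γ + 2*(n:ℝ)) * |γ + 2*(n:ℝ) - 1|) * (c γ n * (x^2)^n * x^(γ-2)) := by ring
    _ ≤ ((γ+2*(n:ℝ))*(γ+2*(n:ℝ)+1)+1) * (c γ n * (x^2)^n * x^(γ-2)) :=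
        mul_le_mul_of_nonneg_right h1 h2
    _ = c γ n * ((γ+2*↑n)*(γ+2*↑n+1)+1) * (x^2)^n * x^(γ-2) := by ring

lemma besselI_eq {γ x : ℝ} (hx : 0 < x) : besselI γ x = P γ x := by
  rw [besselI, P, ← tsum_mul_left]
  apply tsum_congr
  intro n
  have h1 : (x/2) ^ γ = x ^ γ * ((1:ℝ)/2) ^ γ := by
    rw [show x/2 = x*(1/2) by ring, Real.mul_rpow hx.le (by norm_num)]
  have h2 : ((1:ℝ)/2) ^ (γ + 2*(n:ℝ)) = ((1:ℝ)/2) ^ γ * ((1:ℝ)/2) ^ (2*n) := by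
    rw [Real.rpow_add (by norm_num : (0:ℝ) < 1/2), show (2*(n:ℝ)) = ((2*n : ℕ):ℝ) by push_cast; ring,
      Real.rpow_natCast]
  have h3 : x ^ (γ + 2*(n:ℝ)) = x ^ γ * x ^ (2*n) := by
    rw [rpow_split hx, pow_mul]
  have h4 : (x/2) ^ (2*n) = x ^ (2*n) * ((1:ℝ)/2) ^ (2*n) := by
    rw [show x/2 = x*(1/2) by ring, mul_pow]
  rw [c, h1, h2, h3, h4]
  ring

section Deriv

variable {γ x : ℝ}

lemma key_bound {a b : ℝ} (hγ : 0 ≤ γ) (ha0 : 0 < a) (ha1 : a ≤ 1) (n : ℕ)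
    {y : ℝ} (hy : y ∈ Ioo a b) {j : ℝ} (hj1 : 1 ≤ j) (hj2 : j ≤ 2) :
    y ^ (γ + 2*(n:ℝ) - j) ≤ b ^ γ * (b^2)^n / a^2 := by
  have hy0 : 0 < y := lt_trans ha0 hy.1
  have hb0 : 0 < b := lt_trans hy0 hy.2
  have h0 : (0:ℝ) ≤ (n:ℝ) := Nat.cast_nonneg n
  rw [Real.rpow_sub hy0]
  have hnum : y ^ (γ + 2*(n:ℝ)) ≤ b ^ γ * (b^2)^n := by
    rw [← rpow_split hb0]
    exact Real.rpow_le_rpow hy0.le hy.2.le (by linarith)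
  have hden : a^2 ≤ y ^ j := by
    have h1 : (a:ℝ) ^ (2:ℝ) ≤ a ^ j := Real.rpow_le_rpow_of_exponent_ge ha0 ha1 hj2
    have h2 : a ^ j ≤ y ^ j := Real.rpow_le_rpow ha0.le hy.1.le (by linarith)
    calc a^2 = a ^ ((2:ℕ):ℝ) := by rw [Real.rpow_natCast]
      _ = a ^ (2:ℝ) := by norm_num
      _ ≤ y ^ j := le_trans h1 h2
  exact div_le_div₀ (by positivity) hnum (by positivity) hden

lemma hasDerivAt_P (hγ : 0 ≤ γ) (hx : 0 < x) : HasDerivAt (P γ) (D1 γ x) x := by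
  set a := min (x/2) (1/2) with ha
  set b := x + 1 with hb
  have ha0 : 0 < a := by apply lt_min <;> linarith
  have ha1 : a ≤ 1 := le_trans (min_le_right _ _) (by norm_num)
  have hxmem : x ∈ Ioo a b := ⟨lt_of_le_of_lt (min_le_left _ _) (by linarith), by linarith⟩
  have hb0 : (0:ℝ) < b := by linarith
  have husum : Summable (fun n : ℕ =>
      (c γ n * ((γ+2*n)*(γ+2*n+1)+1) * (b^2)^n) * (b^γ / a^2)) :=
    (summable_core hγ (sq_nonneg b)).mul_right _
  have H := hasDerivAt_tsum_of_isPreconnected husum isOpen_Ioo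
    (convex_Ioo a b).isPreconnected
    (g := fun n y => c γ n * y ^ (γ + 2*(n:ℝ)))
    (g' := fun n y => c γ n * ((γ + 2*(n:ℝ)) * y ^ (γ + 2*(n:ℝ) - 1)))
    (fun n y hy =>
      (Real.hasDerivAt_rpow_const (Or.inl (ne_of_gt (lt_trans ha0 hy.1)))).const_mul (c γ n))
    (fun n y hy => ?_) hxmem (sumP hγ hx) hxmem
  · exact H
  · have hy0 : 0 < y := lt_trans ha0 hy.1
    have h0 : (0:ℝ) ≤ (n:ℝ) := Nat.cast_nonneg n
    have hl : (0:ℝ) ≤ γ + 2*(n:ℝ) := by linarith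
    have hkey := key_bound hγ ha0 ha1 n hy (le_refl 1) (by norm_num)
    rw [Real.norm_eq_abs, abs_mul, abs_mul, abs_of_nonneg (c_pos hγ n).le, abs_of_nonneg hl,
      abs_of_nonneg (Real.rpow_pos_of_pos hy0 _).le]
    have h1 := lin_le_Q hγ n
    have hrpos : (0:ℝ) ≤ b^γ * (b^2)^n / a^2 := by
      have := (Real.rpow_pos_of_pos hb0 γ).le
      positivity
    calc c γ n * ((γ + 2*(n:ℝ)) * y ^ (γ + 2*(n:ℝ) - 1))
        ≤ c γ n * (((γ+2*(n:ℝ))*(γ+2*(n:ℝ)+1)+1) * (b^γ * (b^2)^n / a^2)) := by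
          apply mul_le_mul_of_nonneg_left _ (c_pos hγ n).le
          exact mul_le_mul h1 hkey (Real.rpow_pos_of_pos hy0 _).le
            (le_trans (by linarith [one_le_Q hγ n] : (0:ℝ) ≤ (γ+2*(n:ℝ))*(γ+2*(n:ℝ)+1)+1) (le_refl _))
      _ = (c γ n * ((γ+2*↑n)*(γ+2*↑n+1)+1) * (b^2)^n) * (b^γ / a^2) := by ring

lemma hasDerivAt_D1 (hγ : 0 ≤ γ) (hx : 0 < x) : HasDerivAt (D1 γ) (D2 γ x) x := by
  set a := min (x/2) (1/2) with ha
  set b := x + 1 with hb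
  have ha0 : 0 < a := by apply lt_min <;> linarith
  have ha1 : a ≤ 1 := le_trans (min_le_right _ _) (by norm_num)
  have hxmem : x ∈ Ioo a b := ⟨lt_of_le_of_lt (min_le_left _ _) (by linarith), by linarith⟩
  have hb0 : (0:ℝ) < b := by linarith
  have husum : Summable (fun n : ℕ =>
      (c γ n * ((γ+2*n)*(γ+2*n+1)+1) * (b^2)^n) * (b^γ / a^2)) :=
    (summable_core hγ (sq_nonneg b)).mul_right _
  have H := hasDerivAt_tsum_of_isPreconnected husum isOpen_Ioo
    (convex_Ioo a b).isPreconnected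
    (g := fun n y => c γ n * ((γ + 2*(n:ℝ)) * y ^ (γ + 2*(n:ℝ) - 1)))
    (g' := fun n y => c γ n * ((γ + 2*(n:ℝ)) * ((γ + 2*(n:ℝ) - 1) * y ^ (γ + 2*(n:ℝ) - 2))))
    (fun n y hy => ?_) (fun n y hy => ?_) hxmem (sumD1 hγ hx) hxmem
  · exact H
  · have hy0 : 0 < y := lt_trans ha0 hy.1
    have hd := (Real.hasDerivAt_rpow_const (p := γ + 2*(n:ℝ) - 1) (Or.inl hy0.ne')).const_mul
      (γ + 2*(n:ℝ))
    have hd2 := hd.const_mul (c γ n)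
    simpa [show γ + 2*(n:ℝ) - 1 - 1 = γ + 2*(n:ℝ) - 2 from by ring, mul_assoc] using hd2
  · have hy0 : 0 < y := lt_trans ha0 hy.1
    have h0 : (0:ℝ) ≤ (n:ℝ) := Nat.cast_nonneg n
    have hl : (0:ℝ) ≤ γ + 2*(n:ℝ) := by linarith
    have hkey := key_bound hγ ha0 ha1 n hy (by norm_num : (1:ℝ) ≤ 2) (le_refl 2)
    rw [Real.norm_eq_abs, abs_mul, abs_mul, abs_mul, abs_of_nonneg (c_pos hγ n).le,
      abs_of_nonneg hl, abs_of_nonneg (Real.rpow_pos_of_pos hy0 _).le]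
    have h1 := quad_le_Q hγ n
    have habs : (0:ℝ) ≤ |γ + 2*(n:ℝ) - 1| := abs_nonneg _
    calc c γ n * ((γ + 2*(n:ℝ)) * (|γ + 2*(n:ℝ) - 1| * y ^ (γ + 2*(n:ℝ) - 2)))
        = c γ n * (((γ + 2*(n:ℝ)) * |γ + 2*(n:ℝ) - 1|) * y ^ (γ + 2*(n:ℝ) - 2)) := by ring
      _ ≤ c γ n * (((γ+2*(n:ℝ))*(γ+2*(n:ℝ)+1)+1) * (b^γ * (b^2)^n / a^2)) := by
          apply mul_le_mul_of_nonneg_left _ (c_pos hγ n).le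
          exact mul_le_mul h1 hkey (Real.rpow_pos_of_pos hy0 _).le
            (le_trans (by linarith [one_le_Q hγ n]) (le_refl _))
      _ = (c γ n * ((γ+2*↑n)*(γ+2*↑n+1)+1) * (b^2)^n) * (b^γ / a^2) := by ring

end Deriv

lemma ode {γ x : ℝ} (hγ : 0 ≤ γ) (hx : 0 < x) :
    x^2 * D2 γ x + x * D1 γ x = (x^2 + γ^2) * P γ x := by
  have hP := sumP hγ hx
  have hD1 := sumD1 hγ hx
  have hD2 := sumD2 hγ hx
  have hm1 : ∀ t : ℝ, x * x ^ (t-1) = x ^ t := by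
    intro t
    nth_rewrite 1 [← Real.rpow_one x]
    rw [← Real.rpow_add hx]
    norm_num
  have hm2 : ∀ t : ℝ, x^2 * x ^ (t-2) = x ^ t := by
    intro t
    nth_rewrite 1 [← Real.rpow_natCast x 2]
    rw [← Real.rpow_add hx]
    norm_num
  -- the combined series
  set p : ℕ → ℝ := fun n => c γ n * x ^ (γ + 2*(n:ℝ)) with hp
  set A : ℕ → ℝ := fun n =>
    x^2 * (c γ n * ((γ + 2*(n:ℝ)) * ((γ + 2*(n:ℝ) - 1) * x ^ (γ + 2*(n:ℝ) - 2))))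
    + x * (c γ n * ((γ + 2*(n:ℝ)) * x ^ (γ + 2*(n:ℝ) - 1))) with hA
  have hAval : ∀ n, A n = c γ n * (γ + 2*(n:ℝ))^2 * x ^ (γ + 2*(n:ℝ)) := by
    intro n
    simp only [hA]
    rw [show x^2 * (c γ n * ((γ + 2*(n:ℝ)) * ((γ + 2*(n:ℝ) - 1) * x ^ (γ + 2*(n:ℝ) - 2))))
        = (c γ n * ((γ + 2*(n:ℝ)) * (γ + 2*(n:ℝ) - 1))) * (x^2 * x ^ (γ + 2*(n:ℝ) - 2)) from by ring,
      show x * (c γ n * ((γ + 2*(n:ℝ)) * x ^ (γ + 2*(n:ℝ) - 1)))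
        = (c γ n * (γ + 2*(n:ℝ))) * (x * x ^ (γ + 2*(n:ℝ) - 1)) from by ring,
      hm1, hm2]
    ring
  have hsumA : Summable A := (hD2.mul_left (x^2)).add (hD1.mul_left x)
  have hsump : Summable p := hP
  -- e n = A n - γ^2 * p n
  set e : ℕ → ℝ := fun n => A n - γ^2 * p n with he
  have hsume : Summable e := hsumA.sub (hsump.mul_left _)
  have he0 : e 0 = 0 := by
    simp only [he, hp]
    rw [hAval 0]
    push_cast
    ring
  have heS : ∀ n : ℕ, e (n+1) = x^2 * p n := by
    intro n
    simp only [he, hp]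
    rw [hAval (n+1)]
    have hcast : ((n+1:ℕ):ℝ) = (n:ℝ) + 1 := by push_cast; ring
    have hxs : x ^ (γ + 2*((n:ℝ)+1)) = x^2 * x ^ (γ + 2*(n:ℝ)) := by
      rw [show γ + 2*((n:ℝ)+1) = (γ + 2*(n:ℝ)) + ((2:ℕ):ℝ) from by push_cast; ring,
        Real.rpow_add hx, Real.rpow_natCast]
      ring
    rw [hcast, hxs]
    have hrec := c_rec hγ n
    have hq : (γ + 2*((n:ℝ)+1))^2 - γ^2 = 4*((n:ℝ)+1)*(γ+(n:ℝ)+1) := by ring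
    have : c γ (n+1) * (γ + 2*((n:ℝ)+1))^2 - γ^2 * c γ (n+1) = c γ n := by
      calc c γ (n+1) * (γ + 2*((n:ℝ)+1))^2 - γ^2 * c γ (n+1)
          = c γ (n+1) * ((γ + 2*((n:ℝ)+1))^2 - γ^2) := by ring
        _ = c γ (n+1) * (4*((n:ℝ)+1)*(γ+(n:ℝ)+1)) := by rw [hq]
        _ = c γ n := hrec
    calc c γ (n+1) * (γ + 2*((n:ℝ)+1))^2 * (x^2 * x ^ (γ + 2*(n:ℝ)))
        - γ^2 * (c γ (n+1) * (x^2 * x ^ (γ + 2*(n:ℝ))))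
        = (c γ (n+1) * (γ + 2*((n:ℝ)+1))^2 - γ^2 * c γ (n+1)) * (x^2 * x ^ (γ + 2*(n:ℝ))) := by ring
      _ = c γ n * (x^2 * x ^ (γ + 2*(n:ℝ))) := by rw [this]
      _ = x^2 * (c γ n * x ^ (γ + 2*(n:ℝ))) := by ring
  have htsum_e : ∑' n, e n = x^2 * P γ x := by
    rw [Summable.tsum_eq_zero_add hsume, he0, zero_add]
    have : (fun n : ℕ => e (n+1)) = fun n => x^2 * p n := funext heS
    rw [this, tsum_mul_left]
    rfl
  have hsplit : ∑' n, e n = (x^2 * D2 γ x + x * D1 γ x) - γ^2 * P γ x := by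
    rw [he]
    rw [Summable.tsum_sub hsumA (hsump.mul_left _)]
    congr 1
    · rw [hA]
      rw [Summable.tsum_add (hD2.mul_left (x^2)) (hD1.mul_left x), tsum_mul_left, tsum_mul_left]
      rfl
    · rw [tsum_mul_left]
      rfl
  have := hsplit.symm.trans htsum_e
  linarith [this]

lemma P_pos {γ x : ℝ} (hγ : 0 ≤ γ) (hx : 0 < x) : 0 < P γ x := by
  rw [P]
  apply Summable.tsum_pos (sumP hγ hx)
    (fun n => mul_nonneg (c_pos hγ n).le (Real.rpow_pos_of_pos hx _).le) 0
  exact mul_pos (c_pos hγ 0) (Real.rpow_pos_of_pos hx _)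

lemma D1_nonneg {γ x : ℝ} (hγ : 0 ≤ γ) (hx : 0 < x) : 0 ≤ D1 γ x := by
  rw [D1]
  apply tsum_nonneg
  intro n
  have h0 : (0:ℝ) ≤ (n:ℝ) := Nat.cast_nonneg n
  have hl : (0:ℝ) ≤ γ + 2*(n:ℝ) := by linarith
  exact mul_nonneg (c_pos hγ n).le
    (mul_nonneg hl (Real.rpow_pos_of_pos hx _).le)

/-- The constant `M γ`. -/
noncomputable def M (γ : ℝ) : ℝ := ∑' n : ℕ, c γ n * ((γ+2*(n:ℝ))*(γ+2*(n:ℝ)+1)+1)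

lemma sumM {γ : ℝ} (hγ : 0 ≤ γ) :
    Summable (fun n : ℕ => c γ n * ((γ+2*(n:ℝ))*(γ+2*(n:ℝ)+1)+1)) := by
  have h := summable_core hγ (zero_le_one : (0:ℝ) ≤ 1)
  simpa using h

lemma P_le {γ x : ℝ} (hγ : 0 ≤ γ) (hx : 0 < x) (hx1 : x ≤ 1) : P γ x ≤ M γ * x ^ γ := by
  rw [P, M, ← tsum_mul_right]
  apply Summable.tsum_le_tsum _ (sumP hγ hx) ((sumM hγ).mul_right _)
  intro n
  have h0 : (0:ℝ) ≤ (n:ℝ) := Nat.cast_nonneg n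
  rw [rpow_split hx]
  have hxx : (x^2)^n ≤ 1 := by
    apply pow_le_one₀ (sq_nonneg x)
    nlinarith
  have hQ := one_le_Q hγ n
  have hxg := (Real.rpow_pos_of_pos hx γ).le
  calc c γ n * (x ^ γ * (x^2)^n) ≤ c γ n * (x ^ γ * 1) := by
        apply mul_le_mul_of_nonneg_left _ (c_pos hγ n).le
        exact mul_le_mul_of_nonneg_left hxx hxg
    _ = 1 * (c γ n * x ^ γ) := by ring
    _ ≤ ((γ+2*(n:ℝ))*(γ+2*(n:ℝ)+1)+1) * (c γ n * x ^ γ) := by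
        apply mul_le_mul_of_nonneg_right hQ
        exact mul_nonneg (c_pos hγ n).le hxg
    _ = c γ n * ((γ+2*↑n)*(γ+2*↑n+1)+1) * x ^ γ := by ring

lemma D1_le {γ x : ℝ} (hγ : 0 ≤ γ) (hx : 0 < x) (hx1 : x ≤ 1) : D1 γ x ≤ M γ * x ^ (γ-1) := by
  rw [D1, M, ← tsum_mul_right]
  apply Summable.tsum_le_tsum _ (sumD1 hγ hx) ((sumM hγ).mul_right _)
  intro n
  have h0 : (0:ℝ) ≤ (n:ℝ) := Nat.cast_nonneg n
  have he : x ^ (γ + 2*(n:ℝ) - 1) = x ^ (γ-1) * (x^2)^n := by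
    rw [show γ + 2*(n:ℝ) - 1 = (γ-1) + 2*(n:ℝ) by ring, rpow_split hx]
  rw [he]
  have hxx : (x^2)^n ≤ 1 := by
    apply pow_le_one₀ (sq_nonneg x)
    nlinarith
  have hQ := lin_le_Q hγ n
  have hxg := (Real.rpow_pos_of_pos hx (γ-1)).le
  have hl : (0:ℝ) ≤ γ + 2*(n:ℝ) := by linarith
  calc c γ n * ((γ + 2*(n:ℝ)) * (x ^ (γ-1) * (x^2)^n))
      ≤ c γ n * ((γ + 2*(n:ℝ)) * (x ^ (γ-1) * 1)) := by
        apply mul_le_mul_of_nonneg_left _ (c_pos hγ n).le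
        apply mul_le_mul_of_nonneg_left _ hl
        exact mul_le_mul_of_nonneg_left hxx hxg
    _ = (γ + 2*(n:ℝ)) * (c γ n * x ^ (γ-1)) := by ring
    _ ≤ ((γ+2*(n:ℝ))*(γ+2*(n:ℝ)+1)+1) * (c γ n * x ^ (γ-1)) := by
        apply mul_le_mul_of_nonneg_right hQ
        exact mul_nonneg (c_pos hγ n).le hxg
    _ = c γ n * ((γ+2*↑n)*(γ+2*↑n+1)+1) * x ^ (γ-1) := by ring

lemma M_pos {γ : ℝ} (hγ : 0 ≤ γ) : 0 < M γ := by
  rw [M]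
  apply Summable.tsum_pos (sumM hγ) (fun n => mul_nonneg (c_pos hγ n).le
    (le_trans zero_le_one (one_le_Q hγ n))) 0
  exact mul_pos (c_pos hγ 0) (lt_of_lt_of_le zero_lt_one (one_le_Q hγ 0))

lemma G_hasDeriv {α β : ℝ} (hα : 0 ≤ α) (hβ : 0 ≤ β) {y : ℝ} (hy : 0 < y) :
    HasDerivAt (fun z => z * (D1 β z * P α z - P β z * D1 α z))
      ((β^2 - α^2) * P α y * P β y / y) y := by
  have hW : HasDerivAt (fun z => D1 β z * P α z - P β z * D1 α z)
      ((D2 β y * P α y + D1 β y * D1 α y) - (D1 β y * D1 α y + P β y * D2 α y)) y :=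
    ((hasDerivAt_D1 hβ hy).mul (hasDerivAt_P hα hy)).sub
      ((hasDerivAt_P hβ hy).mul (hasDerivAt_D1 hα hy))
  have hG := (hasDerivAt_id' y).mul hW
  refine hG.congr_deriv (Eq.symm ?_)
  have o1 := ode hβ hy
  have o2 := ode hα hy
  have hyne : y ≠ 0 := hy.ne'
  rw [div_eq_iff hyne]
  linear_combination P β y * o2 - P α y * o1

lemma G_pos {α β : ℝ} (hα : 0 ≤ α) (hαβ : α < β) {x : ℝ} (hx : 0 < x) :
    0 < x * (D1 β x * P α x - P β x * D1 α x) := by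
  have hβ : 0 ≤ β := le_trans hα hαβ.le
  set G : ℝ → ℝ := fun z => z * (D1 β z * P α z - P β z * D1 α z) with hGdef
  have hmono : StrictMonoOn G (Ioi 0) := by
    apply strictMonoOn_of_deriv_pos (convex_Ioi 0)
    · intro y hy
      rw [mem_Ioi] at hy
      exact (G_hasDeriv hα hβ hy).continuousAt.continuousWithinAt
    · intro y hy
      rw [interior_Ioi, mem_Ioi] at hy
      rw [(G_hasDeriv hα hβ hy).deriv]
      have h1 : 0 < β^2 - α^2 := by nlinarith
      have h2 := P_pos hα hy
      have h3 := P_pos hβ hy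
      positivity
  have hab : 0 < α + β := by linarith
  have htend : Tendsto G (𝓝[>] (0:ℝ)) (𝓝 0) := by
    have hMα := M_pos hα
    have hMβ := M_pos hβ
    apply squeeze_zero_norm' (a := fun y => (2 * M α * M β) * y ^ (α+β))
    · filter_upwards [Ioo_mem_nhdsGT (show (0:ℝ) < 1 by norm_num)] with y hy
      have hy0 : 0 < y := hy.1
      have hy1 : y ≤ 1 := hy.2.le
      have b1 : D1 β y * P α y ≤ (M β * y ^ (β-1)) * (M α * y ^ α) := by
        apply mul_le_mul (D1_le hβ hy0 hy1) (P_le hα hy0 hy1) (P_pos hα hy0).le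
        positivity
      have b2 : P β y * D1 α y ≤ (M β * y ^ β) * (M α * y ^ (α-1)) := by
        apply mul_le_mul (P_le hβ hy0 hy1) (D1_le hα hy0 hy1) (D1_nonneg hα hy0)
        positivity
      have e1 : y * ((M β * y ^ (β-1)) * (M α * y ^ α)) = M α * M β * y ^ (α+β) := by
        rw [show (α+β:ℝ) = 1 + (β-1) + α by ring, Real.rpow_add hy0, Real.rpow_add hy0,
          Real.rpow_one]
        ring
      have e2 : y * ((M β * y ^ β) * (M α * y ^ (α-1))) = M α * M β * y ^ (α+β) := by
        rw [show (α+β:ℝ) = 1 + (α-1) + β by ring, Real.rpow_add hy0, Real.rpow_add hy0,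
          Real.rpow_one]
        ring
      have hn1 : 0 ≤ D1 β y * P α y := mul_nonneg (D1_nonneg hβ hy0) (P_pos hα hy0).le
      have hn2 : 0 ≤ P β y * D1 α y := mul_nonneg (P_pos hβ hy0).le (D1_nonneg hα hy0)
      have habs : |D1 β y * P α y - P β y * D1 α y| ≤ D1 β y * P α y + P β y * D1 α y := by
        rw [abs_le]; constructor <;> nlinarith
      calc ‖G y‖ = y * |D1 β y * P α y - P β y * D1 α y| := by
            rw [hGdef]
            simp only [Real.norm_eq_abs, abs_mul, abs_of_nonneg hy0.le]
        _ ≤ y * (D1 β y * P α y + P β y * D1 α y) :=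
            mul_le_mul_of_nonneg_left habs hy0.le
        _ ≤ y * ((M β * y ^ (β-1)) * (M α * y ^ α) + (M β * y ^ β) * (M α * y ^ (α-1))) := by
            apply mul_le_mul_of_nonneg_left _ hy0.le
            exact add_le_add b1 b2
        _ = (2 * M α * M β) * y ^ (α+β) := by
            rw [mul_add, e1, e2]; ring
    · have hc := (Real.continuousAt_rpow_const 0 (α+β) (Or.inr hab.le)).tendsto
      rw [Real.zero_rpow hab.ne'] at hc
      have h2 : Tendsto (fun y : ℝ => y ^ (α+β)) (𝓝[>] (0:ℝ)) (𝓝 0) :=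
        hc.mono_left nhdsWithin_le_nhds
      have := h2.const_mul (2 * M α * M β)
      simpa using this
  have hs : Ioo (0:ℝ) (x/2) ∈ 𝓝[>] (0:ℝ) := Ioo_mem_nhdsGT (by linarith)
  have hhalf : 0 ≤ G (x/2) := by
    apply le_of_tendsto htend
    filter_upwards [hs] with y hy
    exact hmono.monotoneOn (mem_Ioi.mpr hy.1) (mem_Ioi.mpr (by linarith)) hy.2.le
  have : G (x/2) < G x := hmono (mem_Ioi.mpr (by linarith)) (mem_Ioi.mpr hx) (by linarith)
  have hGx : 0 < G x := lt_of_le_of_lt hhalf this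
  exact hGx

end BesselRatio

theorem besselI_ratio_pos_monotone (α β : ℝ) (hα : 0 ≤ α) (hαβ : α < β) :
    (∀ x ∈ Set.Ioi (0 : ℝ), 0 < besselI β x / besselI α x) ∧
    MonotoneOn (fun x => besselI β x / besselI α x) (Set.Ioi (0 : ℝ)) := by
  have hβ : 0 ≤ β := le_trans hα hαβ.le
  constructor
  · intro x hx
    rw [Set.mem_Ioi] at hx
    rw [BesselRatio.besselI_eq hx, BesselRatio.besselI_eq hx]
    exact div_pos (BesselRatio.P_pos hβ hx) (BesselRatio.P_pos hα hx)
  · have hR : StrictMonoOn (fun x => BesselRatio.P β x / BesselRatio.P α x) (Set.Ioi (0:ℝ)) := by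
      apply strictMonoOn_of_deriv_pos (convex_Ioi 0)
      · intro y hy
        rw [Set.mem_Ioi] at hy
        exact ((BesselRatio.hasDerivAt_P hβ hy).div (BesselRatio.hasDerivAt_P hα hy)
          (BesselRatio.P_pos hα hy).ne').continuousAt.continuousWithinAt
      · intro y hy
        rw [interior_Ioi, Set.mem_Ioi] at hy
        have hd := (BesselRatio.hasDerivAt_P hβ hy).div (BesselRatio.hasDerivAt_P hα hy) (BesselRatio.P_pos hα hy).ne'
        rw [show deriv (fun x => BesselRatio.P β x / BesselRatio.P α x) y = _ from hd.deriv]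
        apply div_pos
        · have hG := BesselRatio.G_pos hα hαβ hy
          nlinarith
        · exact pow_pos (BesselRatio.P_pos hα hy) 2
    intro x hx y hy hxy
    rw [Set.mem_Ioi] at hx hy
    simp only
    rw [BesselRatio.besselI_eq hx, BesselRatio.besselI_eq hx, BesselRatio.besselI_eq hy, BesselRatio.besselI_eq hy]
    exact hR.monotoneOn (Set.mem_Ioi.mpr hx) (Set.mem_Ioi.mpr hy) hxy
end

section
/- Let f, g: ℝ → ℝ with g(x) = Σ-type partial summation relation g(x) - g(a) = li(x) - li(a) - (x - f(x))/log(x) + (a - f(a))/log(a) - ∫_a^x (t - f(t))/(t·log(t)²) dt for x ≥ a > 2. If |f(t) - t| ≤ (√t/(8π))·log(t)·(log(t) - 3) for all t ≥ a, then |g(x) - li(x)| ≤ (√x/(8π))·(log(x) - 3) + |g(a) - li(a) - (f(a) - a)/log(a)| + (√x - √a)/(4π) for all x ≥ a. -/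
open Real MeasureTheory intervalIntegral

/-- Partial-summation transfer of a Schoenfeld-type bound from `f` (e.g. `ψ` or `ϑ`) to
`g` (e.g. `π*` or `π`), relative to a logarithmic-integral function `li`. -/
theorem partial_summation_transfer (f g li : ℝ → ℝ) (a : ℝ) (ha : 2 < a)
    (hrel : ∀ x : ℝ, a ≤ x →
      g x - g a = li x - li a - (x - f x) / Real.log x + (a - f a) / Real.log a
        - ∫ t in a..x, (t - f t) / (t * Real.log t ^ 2))
    (hf : ∀ t : ℝ, a ≤ t →
      |f t - t| ≤ Real.sqrt t / (8 * Real.pi) * Real.log t * (Real.log t - 3)) :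
    ∀ x : ℝ, a ≤ x →
      |g x - li x| ≤ Real.sqrt x / (8 * Real.pi) * (Real.log x - 3)
        + |g a - li a - (f a - a) / Real.log a|
        + (Real.sqrt x - Real.sqrt a) / (4 * Real.pi) := by
  intro x hx
  have hπ : (0:ℝ) < Real.pi := Real.pi_pos
  have ha0 : (0:ℝ) < a := by linarith
  have hx0 : (0:ℝ) < x := by linarith
  have hlogx : 0 < Real.log x := Real.log_pos (by linarith)
  have hloga : 0 < Real.log a := Real.log_pos (by linarith)
  set A := g a - li a - (f a - a) / Real.log a with hA
  set I := ∫ t in a..x, (t - f t) / (t * Real.log t ^ 2) with hIdef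
  have key : g x - li x = A + (f x - x) / Real.log x - I := by
    have h := hrel x hx
    have e1 : (f x - x) / Real.log x = -((x - f x) / Real.log x) := by ring
    have e2 : (f a - a) / Real.log a = -((a - f a) / Real.log a) := by ring
    rw [hA, e1, e2]
    linarith [h]
  have t1 : |(f x - x) / Real.log x| ≤ Real.sqrt x / (8 * Real.pi) * (Real.log x - 3) := by
    rw [abs_div, abs_of_pos hlogx, div_le_iff₀ hlogx]
    calc |f x - x| ≤ Real.sqrt x / (8 * Real.pi) * Real.log x * (Real.log x - 3) := hf x hx
      _ = Real.sqrt x / (8 * Real.pi) * (Real.log x - 3) * Real.log x := by ring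
  have hsa : Real.sqrt a ≤ Real.sqrt x := Real.sqrt_le_sqrt hx
  have tI : |I| ≤ (Real.sqrt x - Real.sqrt a) / (4 * Real.pi) := by
    by_cases hInt : IntervalIntegrable (fun t => (t - f t) / (t * Real.log t ^ 2)) volume a x
    · -- bound functions
      have hcont : ContinuousOn (fun t : ℝ => 1 / (8 * Real.pi * Real.sqrt t)) (Set.uIcc a x) := by
        apply ContinuousOn.div continuousOn_const
        · exact (continuous_const.mul Real.continuous_sqrt).continuousOn
        · intro t ht
          rw [Set.uIcc_of_le hx] at ht
          have : 0 < Real.sqrt t := Real.sqrt_pos.2 (by linarith [ht.1])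
          positivity
      have hbint : IntervalIntegrable (fun t : ℝ => 1 / (8 * Real.pi * Real.sqrt t)) volume a x :=
        hcont.intervalIntegrable
      have hderiv : ∀ t ∈ Set.uIcc a x,
          HasDerivAt (fun u : ℝ => Real.sqrt u / (4 * Real.pi)) (1 / (8 * Real.pi * Real.sqrt t)) t := by
        intro t ht
        rw [Set.uIcc_of_le hx] at ht
        have ht0 : (0:ℝ) < t := by linarith [ht.1]
        have hst : 0 < Real.sqrt t := Real.sqrt_pos.2 ht0
        have h1 := (Real.hasDerivAt_sqrt (ne_of_gt ht0)).div_const (4 * Real.pi)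
        refine h1.congr_deriv ?_
        ring
      have hval : (∫ t in a..x, 1 / (8 * Real.pi * Real.sqrt t))
          = (Real.sqrt x - Real.sqrt a) / (4 * Real.pi) := by
        rw [intervalIntegral.integral_eq_sub_of_hasDerivAt hderiv hbint]
        ring
      have hmono : (∫ t in a..x, |(t - f t) / (t * Real.log t ^ 2)|)
          ≤ ∫ t in a..x, 1 / (8 * Real.pi * Real.sqrt t) := by
        apply intervalIntegral.integral_mono_on hx hInt.abs hbint
        intro t ht
        have hta : a ≤ t := ht.1
        have ht0 : (0:ℝ) < t := by linarith
        have hst : 0 < Real.sqrt t := Real.sqrt_pos.2 ht0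
        have hlt : 0 < Real.log t := Real.log_pos (by linarith)
        have hsq : Real.sqrt t ^ 2 = t := Real.sq_sqrt ht0.le
        have hb : |f t - t| ≤ Real.sqrt t / (8 * Real.pi) * Real.log t * (Real.log t - 3) :=
          hf t hta
        have hpos : 0 < t * Real.log t ^ 2 := by positivity
        rw [abs_div, abs_of_pos hpos, div_le_div_iff₀ hpos (by positivity)]
        have habs : |t - f t| = |f t - t| := abs_sub_comm _ _
        rw [habs]
        have h2 : |f t - t| * (8 * Real.pi * Real.sqrt t)
            ≤ (Real.sqrt t / (8 * Real.pi) * Real.log t * (Real.log t - 3)) * (8 * Real.pi * Real.sqrt t) := by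
          apply mul_le_mul_of_nonneg_right hb (by positivity)
        calc |f t - t| * (8 * Real.pi * Real.sqrt t)
            ≤ (Real.sqrt t / (8 * Real.pi) * Real.log t * (Real.log t - 3)) * (8 * Real.pi * Real.sqrt t) := h2
          _ = t * Real.log t * (Real.log t - 3) := by
              field_simp
              linear_combination (Real.log t - 3) * hsq
          _ ≤ 1 * (t * Real.log t ^ 2) := by nlinarith [hsq, ht0, hlt]
      calc |I| ≤ ∫ t in a..x, |(t - f t) / (t * Real.log t ^ 2)| := by
            rw [hIdef]
            exact intervalIntegral.abs_integral_le_integral_abs hx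
        _ ≤ ∫ t in a..x, 1 / (8 * Real.pi * Real.sqrt t) := hmono
        _ = (Real.sqrt x - Real.sqrt a) / (4 * Real.pi) := hval
    · rw [hIdef, intervalIntegral.integral_undef hInt]
      simp only [abs_zero]
      have : 0 ≤ Real.sqrt x - Real.sqrt a := by linarith
      positivity
  calc |g x - li x| = |(f x - x) / Real.log x + A + (-I)| := by rw [key]; ring_nf
    _ ≤ |(f x - x) / Real.log x + A| + |(-I)| := abs_add_le _ _
    _ ≤ |(f x - x) / Real.log x| + |A| + |(-I)| := by linarith [abs_add_le ((f x - x) / Real.log x) A]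
    _ ≤ Real.sqrt x / (8 * Real.pi) * (Real.log x - 3) + |A| + (Real.sqrt x - Real.sqrt a) / (4 * Real.pi) := by
        rw [abs_neg]; linarith
end

section
/- Let x ≥ 100 and 0 < ε ≤ 1/100, and set I = [e^{-ε}x, e^{ε}x]. Then the sum over proper prime powers p^m ∈ I with m ≥ 2 of 1/m is at most 4.01·ε·√x + log(log(2x²)). -/
open Real Finset

lemma aux_gap {t : ℝ} (h0 : 0 ≤ t) (h1 : t ≤ 1/200) :
    Real.exp t - Real.exp (-t) ≤ 2.011 * t := by
  have h2 := Real.add_one_le_exp (-t)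
  have h3 : Real.exp t * Real.exp (-t) = 1 := by
    rw [← Real.exp_add]; simp
  have h4 : (0:ℝ) < Real.exp (-t) := Real.exp_pos _
  nlinarith [sq_nonneg (Real.exp (-t) - 1 + t), sq_nonneg t, mul_pos h4 h4]

lemma aux_sum_sq : ∀ M : ℕ, 1 ≤ M → ∑ m ∈ Finset.Icc 2 M, (1:ℝ)/(m:ℝ)^2 ≤ 1 - 1/M := by
  intro M
  induction M with
  | zero => omega
  | succ n ih =>
    intro _
    rcases Nat.lt_or_ge n 1 with h | h
    · interval_cases n; norm_num
    · rw [Finset.sum_Icc_succ_top (by omega)]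
      have ihn := ih h
      have hn : (1:ℝ) ≤ n := by exact_mod_cast h
      have key : (1:ℝ)/((n:ℝ)+1)^2 ≤ 1/n - 1/(n+1) := by
        rw [div_sub_div _ _ (by linarith) (by linarith), div_le_div_iff₀ (by positivity) (by positivity)]
        ring_nf
        nlinarith
      push_cast
      linarith

lemma aux_sum_inv : ∀ M : ℕ, 1 ≤ M → ∑ m ∈ Finset.Icc 2 M, (1:ℝ)/(m:ℝ) ≤ Real.log M := by
  intro M
  induction M with
  | zero => omega
  | succ n ih =>
    intro _
    rcases Nat.lt_or_ge n 1 with h | h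
    · interval_cases n; norm_num
    · rw [Finset.sum_Icc_succ_top (by omega)]
      have ihn := ih h
      have hn : (1:ℝ) ≤ n := by exact_mod_cast h
      have h2 := Real.add_one_le_exp (-(1/((n:ℝ)+1)))
      have key : (1:ℝ)/((n:ℝ)+1) ≤ Real.log ((n:ℝ)+1) - Real.log n := by
        rw [← Real.log_div (by linarith) (by linarith)]
        rw [Real.le_log_iff_exp_le (by positivity)]
        have h5 : (0:ℝ) < 1 - 1/((n:ℝ)+1) := by
          rw [sub_pos, div_lt_one (by linarith)]; linarith
        have h6 : Real.exp (1/((n:ℝ)+1)) ≤ 1/(1 - 1/((n:ℝ)+1)) := by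
          rw [le_div_iff₀ h5]
          have hinv : Real.exp (1/((n:ℝ)+1)) * Real.exp (-(1/((n:ℝ)+1))) = 1 := by
            rw [← Real.exp_add]; simp
          nlinarith [Real.exp_pos (1/((n:ℝ)+1)), Real.exp_pos (-(1/((n:ℝ)+1)))]
        have h7 : 1/(1 - 1/((n:ℝ)+1)) = ((n:ℝ)+1)/n := by
          field_simp
          rw [add_sub_cancel_right, div_self (ne_of_gt (by linarith))]
        rw [h7] at h6; exact h6
      push_cast
      linarith

lemma aux_count {m : ℕ} (hm : 1 ≤ m) {A B : ℝ} (hA : 0 < A) (hAB : A ≤ B)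
    (s : Finset ℕ) (hs : ∀ p ∈ s, A ≤ (p:ℝ)^m ∧ (p:ℝ)^m ≤ B) :
    (s.card : ℝ) ≤ B ^ (1/(m:ℝ)) - A ^ (1/(m:ℝ)) + 1 := by
  have hmR : (0:ℝ) < m := by exact_mod_cast hm
  have hab : A ^ (1/(m:ℝ)) ≤ B ^ (1/(m:ℝ)) :=
    Real.rpow_le_rpow hA.le hAB (by positivity)
  have hsub : s ⊆ Finset.Icc ⌈A ^ (1/(m:ℝ))⌉₊ ⌊B ^ (1/(m:ℝ))⌋₊ := by
    intro p hp
    obtain ⟨hpA, hpB⟩ := hs p hp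
    have hp0 : (0:ℝ) ≤ (p:ℝ) := Nat.cast_nonneg _
    have hpow : ((p:ℝ)^m) ^ (1/(m:ℝ)) = (p:ℝ) := by
      rw [← Real.rpow_natCast (p:ℝ) m, ← Real.rpow_mul hp0, mul_one_div,
        div_self hmR.ne', Real.rpow_one]
    have hA' : A ^ (1/(m:ℝ)) ≤ (p:ℝ) := by
      rw [← hpow]; exact Real.rpow_le_rpow hA.le hpA (by positivity)
    have hB' : (p:ℝ) ≤ B ^ (1/(m:ℝ)) := by
      rw [← hpow]; exact Real.rpow_le_rpow (pow_nonneg hp0 m) hpB (by positivity)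
    rw [Finset.mem_Icc]
    exact ⟨Nat.ceil_le.mpr hA', Nat.le_floor hB'⟩
  have hcard := Finset.card_le_card hsub
  rw [Nat.card_Icc] at hcard
  have h1 : (s.card : ℝ) ≤ ((⌊B ^ (1/(m:ℝ))⌋₊ + 1 - ⌈A ^ (1/(m:ℝ))⌉₊ : ℕ) : ℝ) := by
    exact_mod_cast hcard
  by_cases hc : ⌈A ^ (1/(m:ℝ))⌉₊ ≤ ⌊B ^ (1/(m:ℝ))⌋₊ + 1
  · rw [Nat.cast_sub hc] at h1
    have h2 : ((⌊B ^ (1/(m:ℝ))⌋₊ : ℝ)) ≤ B ^ (1/(m:ℝ)) :=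
      Nat.floor_le (Real.rpow_nonneg (hA.trans_le hAB).le _)
    have h3 : A ^ (1/(m:ℝ)) ≤ (⌈A ^ (1/(m:ℝ))⌉₊ : ℝ) := Nat.le_ceil _
    push_cast at h1
    linarith
  · rw [Nat.sub_eq_zero_of_le (by omega), Nat.le_zero] at hcard
    rw [hcard]
    push_cast
    linarith

lemma aux_log {x : ℝ} (hx : 100 ≤ x) : Real.log (2*x) / Real.log 2 ≤ Real.log (2*x^2) := by
  have hx0 : (0:ℝ) < x := by linarith
  have hlog2pos : (0:ℝ) < Real.log 2 := Real.log_pos (by norm_num)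
  have hl1 : Real.log (2*x) = Real.log 2 + Real.log x :=
    Real.log_mul (by norm_num) (ne_of_gt hx0)
  have hl2 : Real.log (2*x^2) = Real.log 2 + 2 * Real.log x := by
    rw [Real.log_mul (by norm_num) (by positivity), Real.log_pow]
    push_cast; ring
  have hlx : 6 * Real.log 2 ≤ Real.log x := by
    have h64 : Real.log (2^6) ≤ Real.log x :=
      Real.log_le_log (by norm_num) (by norm_num; linarith)
    rw [Real.log_pow] at h64
    push_cast at h64
    linarith
  have h2a := Real.log_two_gt_d9
  have h2b := Real.log_two_lt_d9
  have hX : (4:ℝ) ≤ Real.log x := by nlinarith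
  rw [div_le_iff₀ hlog2pos, hl1, hl2]
  nlinarith [mul_nonneg (show (0:ℝ) ≤ Real.log x - 4 by linarith)
    (show (0:ℝ) ≤ 2 * Real.log 2 - 1 by nlinarith)]

/-- For `x ≥ 100` and `0 < ε ≤ 1/100`, the sum of `1/m` over proper prime powers
`p^m ∈ [e^{-ε}x, e^{ε}x]` with `m ≥ 2` is at most `4.01 ε √x + log log(2x²)`. -/
theorem prime_power_sum_bound (x ε : ℝ) (hx : 100 ≤ x) (hε0 : 0 < ε) (hε : ε ≤ 1 / 100) :
    (∑ᶠ (pm : ℕ × ℕ) (_ : pm.1.Prime ∧ 2 ≤ pm.2 ∧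
        Real.exp (-ε) * x ≤ (pm.1 : ℝ) ^ pm.2 ∧ (pm.1 : ℝ) ^ pm.2 ≤ Real.exp ε * x),
        (1 : ℝ) / pm.2)
      ≤ 4.01 * ε * Real.sqrt x + Real.log (Real.log (2 * x ^ 2)) := by
  classical
  have hx0 : (0:ℝ) < x := by linarith
  have hx1 : (1:ℝ) ≤ x := by linarith
  set A := Real.exp (-ε) * x with hAdef
  set B := Real.exp ε * x with hBdef
  have hA0 : 0 < A := by positivity
  have hAB : A ≤ B := by
    have h := Real.exp_le_exp.mpr (show -ε ≤ ε by linarith)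
    exact mul_le_mul_of_nonneg_right h hx0.le
  have hexp2 : Real.exp ε ≤ 2 := by
    have h1 := Real.add_one_le_exp (-ε)
    have h2 : Real.exp ε * Real.exp (-ε) = 1 := by rw [← Real.exp_add]; simp
    nlinarith [Real.exp_pos (-ε), Real.exp_pos ε]
  have hB2x : B ≤ 2 * x := mul_le_mul_of_nonneg_right hexp2 hx0.le
  have hlog2pos : (0:ℝ) < Real.log 2 := Real.log_pos (by norm_num)
  set M := ⌊Real.log (2*x) / Real.log 2⌋₊ with hMdef
  set K := ⌊2*x⌋₊ with hKdef
  set T := (Finset.Icc 2 K ×ˢ Finset.Icc 2 M).filter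
      (fun pm : ℕ × ℕ => pm.1.Prime ∧ 2 ≤ pm.2 ∧ A ≤ (pm.1 : ℝ) ^ pm.2 ∧ (pm.1 : ℝ) ^ pm.2 ≤ B)
      with hTdef
  have hmem : ∀ pm : ℕ × ℕ, (pm.1.Prime ∧ 2 ≤ pm.2 ∧ A ≤ (pm.1 : ℝ) ^ pm.2 ∧ (pm.1 : ℝ) ^ pm.2 ≤ B)
      → pm ∈ Finset.Icc 2 K ×ˢ Finset.Icc 2 M := by
    rintro ⟨p, m⟩ ⟨hp, hm, hpmA, hpmB⟩
    simp only [Finset.mem_product, Finset.mem_Icc]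
    have hp2 : 2 ≤ p := hp.two_le
    have hp1R : (1:ℝ) ≤ (p:ℝ) := by exact_mod_cast hp.one_lt.le
    refine ⟨⟨hp2, Nat.le_floor ?_⟩, hm, Nat.le_floor ?_⟩
    · have hple : (p:ℝ) ≤ (p:ℝ)^m := le_self_pow₀ hp1R (by omega)
      simp only [Prod.snd] at hpmB
      linarith
    · have h2m : (2:ℝ)^m ≤ 2*x := by
        calc (2:ℝ)^m ≤ (p:ℝ)^m := by
              apply pow_le_pow_left₀ (by norm_num) (by exact_mod_cast hp2)
          _ ≤ B := hpmB
          _ ≤ 2*x := hB2x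
      have hl := Real.log_le_log (by positivity) h2m
      rw [Real.log_pow] at hl
      rw [le_div_iff₀ hlog2pos]
      exact_mod_cast hl
  have hsetT : {pm : ℕ × ℕ | pm.1.Prime ∧ 2 ≤ pm.2 ∧ A ≤ (pm.1 : ℝ) ^ pm.2 ∧ (pm.1 : ℝ) ^ pm.2 ≤ B}
      = ↑T := by
    ext pm
    simp only [Set.mem_setOf_eq, hTdef, Finset.coe_filter, Finset.mem_filter, Finset.mem_coe]
    exact ⟨fun h => ⟨hmem pm h, h⟩, fun h => h.2⟩
  have main : (∑ᶠ (pm : ℕ × ℕ) (_ : pm.1.Prime ∧ 2 ≤ pm.2 ∧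
        A ≤ (pm.1 : ℝ) ^ pm.2 ∧ (pm.1 : ℝ) ^ pm.2 ≤ B), (1 : ℝ) / pm.2)
      = ∑ pm ∈ T, (1 : ℝ) / pm.2 := by
    calc (∑ᶠ (pm : ℕ × ℕ) (_ : pm.1.Prime ∧ 2 ≤ pm.2 ∧
          A ≤ (pm.1 : ℝ) ^ pm.2 ∧ (pm.1 : ℝ) ^ pm.2 ≤ B), (1 : ℝ) / pm.2)
        = ∑ᶠ (pm : ℕ × ℕ) (_ : pm ∈ {pm : ℕ × ℕ | pm.1.Prime ∧ 2 ≤ pm.2 ∧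
          A ≤ (pm.1 : ℝ) ^ pm.2 ∧ (pm.1 : ℝ) ^ pm.2 ≤ B}), (1 : ℝ) / pm.2 := rfl
      _ = ∑ᶠ (pm : ℕ × ℕ) (_ : pm ∈ (↑T : Set (ℕ × ℕ))), (1 : ℝ) / pm.2 := by rw [hsetT]
      _ = ∑ pm ∈ T, (1 : ℝ) / pm.2 := finsum_mem_coe_finset _ _
  rw [main, hTdef, Finset.sum_filter, Finset.sum_product_right]
  have hsqrt : Real.sqrt x = x ^ ((1:ℝ)/2) := Real.sqrt_eq_rpow x
  have hsx0 : (0:ℝ) ≤ Real.sqrt x := Real.sqrt_nonneg x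
  have hM1 : 1 ≤ M := by
    apply Nat.le_floor
    rw [Nat.cast_one, le_div_iff₀ hlog2pos, one_mul]
    exact Real.log_le_log (by norm_num) (by linarith)
  have step : ∀ m ∈ Finset.Icc 2 M,
      (∑ p ∈ Finset.Icc 2 K, if ((p, m).1.Prime ∧ 2 ≤ (p, m).2 ∧
          A ≤ ((p, m).1 : ℝ) ^ (p, m).2 ∧ ((p, m).1 : ℝ) ^ (p, m).2 ≤ B)
        then (1:ℝ)/((p, m).2 : ℕ) else 0)
      ≤ 2.011 * ε * Real.sqrt x * (1/(m:ℝ)^2) + 1/(m:ℝ) := by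
    intro m hm
    rw [Finset.mem_Icc] at hm
    have hm2 : 2 ≤ m := hm.1
    have hmR : (2:ℝ) ≤ (m:ℝ) := by exact_mod_cast hm2
    have hm0 : (0:ℝ) < (m:ℝ) := by linarith
    rw [← Finset.sum_filter]
    have hrwc : ∀ p : ℕ, (1:ℝ)/((((p, m).2 : ℕ)):ℝ) = 1/(m:ℝ) := fun p => rfl
    simp only [hrwc]
    rw [Finset.sum_const, nsmul_eq_mul]
    have hcount := aux_count (m := m) (by omega) hA0 hAB
      ((Finset.Icc 2 K).filter (fun p : ℕ => (p, m).1.Prime ∧ 2 ≤ (p, m).2 ∧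
          A ≤ ((p, m).1 : ℝ) ^ (p, m).2 ∧ ((p, m).1 : ℝ) ^ (p, m).2 ≤ B))
      (fun p hp => ⟨(Finset.mem_filter.mp hp).2.2.2.1, (Finset.mem_filter.mp hp).2.2.2.2⟩)
    have hinvm : (0:ℝ) < 1/(m:ℝ) := by positivity
    have ht1 : ε * (1/(m:ℝ)) ≤ 1/200 := by
      have h1 : (1:ℝ)/(m:ℝ) ≤ 1/2 := by
        rw [div_le_div_iff₀ hm0 (by norm_num)]; linarith
      calc ε * (1/(m:ℝ)) ≤ (1/100) * (1/2) := by
            apply mul_le_mul hε h1 hinvm.le (by norm_num)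
        _ = 1/200 := by norm_num
    have hgap := aux_gap (t := ε * (1/(m:ℝ))) (by positivity) ht1
    have hBr : B ^ (1/(m:ℝ)) = Real.exp (ε * (1/(m:ℝ))) * x ^ (1/(m:ℝ)) := by
      rw [hBdef, Real.mul_rpow (Real.exp_pos ε).le hx0.le, ← Real.exp_mul]
    have hAr : A ^ (1/(m:ℝ)) = Real.exp (-(ε * (1/(m:ℝ)))) * x ^ (1/(m:ℝ)) := by
      rw [hAdef, Real.mul_rpow (Real.exp_pos (-ε)).le hx0.le, ← Real.exp_mul, neg_mul]
    have hxm : x ^ (1/(m:ℝ)) ≤ Real.sqrt x := by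
      rw [hsqrt]
      apply Real.rpow_le_rpow_of_exponent_le hx1
      rw [div_le_div_iff₀ hm0 (by norm_num)]; linarith
    have hxm0 : (0:ℝ) ≤ x ^ (1/(m:ℝ)) := Real.rpow_nonneg hx0.le _
    have hdiff : B ^ (1/(m:ℝ)) - A ^ (1/(m:ℝ)) ≤ 2.011 * (ε * (1/(m:ℝ))) * Real.sqrt x := by
      rw [hBr, hAr, ← sub_mul]
      calc (Real.exp (ε * (1/(m:ℝ))) - Real.exp (-(ε * (1/(m:ℝ))))) * x ^ (1/(m:ℝ))
          ≤ (2.011 * (ε * (1/(m:ℝ)))) * Real.sqrt x := by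
            apply mul_le_mul hgap hxm hxm0 (by positivity)
        _ = 2.011 * (ε * (1/(m:ℝ))) * Real.sqrt x := by ring
    have hcard : ((((Finset.Icc 2 K).filter (fun p : ℕ => (p, m).1.Prime ∧ 2 ≤ (p, m).2 ∧
          A ≤ ((p, m).1 : ℝ) ^ (p, m).2 ∧ ((p, m).1 : ℝ) ^ (p, m).2 ≤ B)).card : ℝ))
        ≤ 2.011 * (ε * (1/(m:ℝ))) * Real.sqrt x + 1 := by
      calc _ ≤ B ^ (1/(m:ℝ)) - A ^ (1/(m:ℝ)) + 1 := hcount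
        _ ≤ 2.011 * (ε * (1/(m:ℝ))) * Real.sqrt x + 1 := by linarith
    calc _ ≤ (2.011 * (ε * (1/(m:ℝ))) * Real.sqrt x + 1) * (1/(m:ℝ)) := by
          apply mul_le_mul_of_nonneg_right hcard hinvm.le
      _ = 2.011 * ε * Real.sqrt x * (1/(m:ℝ)^2) + 1/(m:ℝ) := by
          field_simp
  calc _ ≤ ∑ m ∈ Finset.Icc 2 M, (2.011 * ε * Real.sqrt x * (1/(m:ℝ)^2) + 1/(m:ℝ)) :=
        Finset.sum_le_sum step
    _ = 2.011 * ε * Real.sqrt x * (∑ m ∈ Finset.Icc 2 M, 1/(m:ℝ)^2)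
        + ∑ m ∈ Finset.Icc 2 M, 1/(m:ℝ) := by
        rw [Finset.sum_add_distrib, Finset.mul_sum]
    _ ≤ 2.011 * ε * Real.sqrt x * 1 + Real.log M := by
        have h1 := aux_sum_sq M hM1
        have h2 := aux_sum_inv M hM1
        have hM0 : (0:ℝ) < (M:ℝ) := by exact_mod_cast hM1
        have h3 : ∑ m ∈ Finset.Icc 2 M, (1:ℝ)/(m:ℝ)^2 ≤ 1 := by
          have : (0:ℝ) ≤ 1/(M:ℝ) := by positivity
          linarith
        have h4 : (0:ℝ) ≤ 2.011 * ε * Real.sqrt x := by positivity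
        have := mul_le_mul_of_nonneg_left h3 h4
        linarith
    _ ≤ 4.01 * ε * Real.sqrt x + Real.log (Real.log (2 * x ^ 2)) := by
        have hM0 : (0:ℝ) < (M:ℝ) := by exact_mod_cast hM1
        have hlogM : Real.log M ≤ Real.log (Real.log (2 * x ^ 2)) := by
          apply Real.log_le_log hM0
          have hfl : (M:ℝ) ≤ Real.log (2*x) / Real.log 2 :=
            Nat.floor_le (div_nonneg (Real.log_nonneg (by linarith)) hlog2pos.le)
          exact hfl.trans (aux_log hx)
        have h5 : (0:ℝ) ≤ ε * Real.sqrt x := by positivity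
        have h6 : 2.011 * ε * Real.sqrt x * 1 ≤ 4.01 * (ε * Real.sqrt x) := by nlinarith
        calc 2.011 * ε * Real.sqrt x * 1 + Real.log M
            ≤ 4.01 * (ε * Real.sqrt x) + Real.log (Real.log (2 * x ^ 2)) := by linarith
          _ = 4.01 * ε * Real.sqrt x + Real.log (Real.log (2 * x ^ 2)) := by ring
end
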